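/- Let $w : \mathbb{R} \to \mathbb{R}$ be continuous, twice differentiable with $0 < L \leq w \leq U$ and $|w''| \leq M$ everywhere. Let $\omega > 0$ and $\sigma(\tau) = \omega\sqrt{\tau}$. Define the model with transition density $p_1(x|y,\tau) = k_{\sigma(\tau)}(x;y) w(x)/\int k_{\sigma(\tau)}(z;y) w(z)\,dz$ and two-step density $p_2(x|y,\tau) = \int p_1(x|z,\tau) p_1(z|y,\tau)\,dz$. Then there exists $C > 0$ such that for all $x, y \in \mathbb{R}$ and all $\tau > 0$: $(1 - C\tau)\, p_1(x|y, 2\tau) \leq p_2(x|y,\tau) \leq (1 + C\tau)\, p_1(x|y, 2\tau)$. (Note $p_1(x|y,2\tau)$ uses kernel standard deviation $\sqrt{2}\sigma(\tau)$.) -/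

import Mathlib

open MeasureTheory Real

/-- Gaussian density with mean `m` and standard deviation `σ`, evaluated at `y`. -/
noncomputable def gauss (σ m y : ℝ) : ℝ :=
  (Real.sqrt (2 * Real.pi) * σ)⁻¹ * Real.exp (-(y - m) ^ 2 / (2 * σ ^ 2))

/-- One-step transition density of the weighted Gaussian random walk with time
interval `τ` and kernel standard deviation `σ(τ) = ω √τ`; `p1 w ω τ y x` is the
density of a step from `y` to `x`. -/
noncomputable def p1 (w : ℝ → ℝ) (ω τ y x : ℝ) : ℝ :=
  gauss (ω * Real.sqrt τ) y x * w x / ∫ z : ℝ, gauss (ω * Real.sqrt τ) y z * w z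

/-- Two-step transition density, obtained via Chapman–Kolmogorov. -/
noncomputable def p2 (w : ℝ → ℝ) (ω τ y x : ℝ) : ℝ :=
  ∫ z : ℝ, p1 w ω τ z x * p1 w ω τ y z



lemma gauss_pos {σ : ℝ} (hσ : 0 < σ) (m y : ℝ) : 0 < gauss σ m y := by
  unfold gauss
  have h2 : 0 < Real.sqrt (2 * Real.pi) := Real.sqrt_pos.mpr (by positivity)
  positivity

lemma gauss_nonneg {σ : ℝ} (hσ : 0 < σ) (m y : ℝ) : 0 ≤ gauss σ m y := (gauss_pos hσ m y).le

lemma gauss_symm (σ m y : ℝ) : gauss σ m y = gauss σ y m := by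
  unfold gauss; rw [show (y - m) ^ 2 = (m - y) ^ 2 by ring]

lemma gauss_le {σ : ℝ} (hσ : 0 < σ) (m y : ℝ) :
    gauss σ m y ≤ (Real.sqrt (2 * Real.pi) * σ)⁻¹ := by
  unfold gauss
  have h2 : 0 < Real.sqrt (2 * Real.pi) := Real.sqrt_pos.mpr (by positivity)
  have he : Real.exp (-(y - m) ^ 2 / (2 * σ ^ 2)) ≤ 1 := by
    rw [Real.exp_le_one_iff]
    exact div_nonpos_of_nonpos_of_nonneg (neg_nonpos.mpr (by positivity)) (by positivity)
  nlinarith [inv_pos.mpr (mul_pos h2 hσ)]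

lemma continuous_gauss (σ m : ℝ) : Continuous (gauss σ m) := by
  unfold gauss; fun_prop

lemma continuous_gauss_mean (σ y : ℝ) : Continuous (fun m => gauss σ m y) := by
  unfold gauss; fun_prop

lemma gauss_eq {σ : ℝ} (hσ : 0 < σ) (m z : ℝ) : gauss σ m z = (Real.sqrt (2 * Real.pi) * σ)⁻¹ *
    Real.exp (-((2 * σ ^ 2)⁻¹) * (z - m) ^ 2) := by
  unfold gauss
  congr 1
  apply congrArg Real.exp
  have h : (σ:ℝ) ^ 2 ≠ 0 := by positivity
  field_simp

lemma integrable_gauss {σ : ℝ} (hσ : 0 < σ) (m : ℝ) : Integrable (gauss σ m) := by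
  have hb : (0:ℝ) < (2 * σ ^ 2)⁻¹ := by positivity
  have h1 : Integrable (fun z : ℝ => Real.exp (-((2 * σ ^ 2)⁻¹) * z ^ 2)) :=
    integrable_exp_neg_mul_sq hb
  have h2 : Integrable (fun z : ℝ => Real.exp (-((2 * σ ^ 2)⁻¹) * (z - m) ^ 2)) := by
    have := h1.comp_sub_right (g := m)
    simpa using this
  have h3 := h2.const_mul (Real.sqrt (2 * Real.pi) * σ)⁻¹
  apply h3.congr
  filter_upwards with z
  rw [gauss_eq hσ]

lemma integral_gauss {σ : ℝ} (hσ : 0 < σ) (m : ℝ) : ∫ z, gauss σ m z = 1 := by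
  have hb : (0:ℝ) < (2 * σ ^ 2)⁻¹ := by positivity
  have h0 : ∫ z, gauss σ m z =
      (Real.sqrt (2 * Real.pi) * σ)⁻¹ * ∫ z : ℝ, Real.exp (-((2 * σ ^ 2)⁻¹) * (z - m) ^ 2) := by
    rw [← integral_const_mul]
    congr 1; ext z; rw [gauss_eq hσ]
  rw [h0, integral_sub_right_eq_self (μ := volume)
    (fun z : ℝ => Real.exp (-((2 * σ ^ 2)⁻¹) * z ^ 2)) m, integral_gaussian]
  rw [show Real.pi / (2 * σ ^ 2)⁻¹ = 2 * Real.pi * σ ^ 2 by field_simp]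
  have hs : Real.sqrt (2 * Real.pi * σ ^ 2) = Real.sqrt (2 * Real.pi) * σ := by
    rw [Real.sqrt_mul (by positivity), Real.sqrt_sq hσ.le]
  rw [hs]
  have h2 : Real.sqrt (2 * Real.pi) > 0 := Real.sqrt_pos.mpr (by positivity)
  field_simp




lemma le_exp_half {t : ℝ} (ht : 0 ≤ t) : t ≤ Real.exp (t / 2) := by
  have h := Real.add_one_le_exp (t / 4)
  have h2 : Real.exp (t / 2) = Real.exp (t / 4) ^ 2 := by
    rw [← Real.exp_nat_mul]; norm_num; ring_nf
  nlinarith [Real.exp_pos (t / 4), sq_nonneg (t / 4 - 1)]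

lemma sq_mul_exp_le {b x : ℝ} (hb : 0 < b) :
    x ^ 2 * Real.exp (-b * x ^ 2) ≤ b⁻¹ * Real.exp (-(b / 2) * x ^ 2) := by
  set E := Real.exp (-(b / 2) * x ^ 2) with hEdef
  have hE : 0 < E := Real.exp_pos _
  have h := le_exp_half (t := b * x ^ 2) (by positivity)
  have key : Real.exp (b * x ^ 2 / 2) * E = 1 := by
    rw [hEdef, ← Real.exp_add, show b * x ^ 2 / 2 + -(b / 2) * x ^ 2 = 0 by ring, Real.exp_zero]
  have hu : Real.exp (-b * x ^ 2) = E * E := by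
    rw [hEdef, ← Real.exp_add]; congr 1; ring
  have h1 : b * x ^ 2 * E ≤ 1 := by
    calc b * x ^ 2 * E ≤ Real.exp (b * x ^ 2 / 2) * E := mul_le_mul_of_nonneg_right h hE.le
      _ = 1 := key
  have hE2 : 0 ≤ E - b * x ^ 2 * E * E := by nlinarith [mul_le_mul_of_nonneg_right h1 hE.le]
  have hbb : b⁻¹ * b = 1 := inv_mul_cancel₀ hb.ne'
  rw [hu]
  nlinarith [mul_nonneg (inv_pos.mpr hb).le hE2]


variable {σ : ℝ}

lemma integrable_gauss_lin (hσ : 0 < σ) (y : ℝ) :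
    Integrable (fun z => gauss σ y z * (z - y)) := by
  have hb : (0:ℝ) < (2 * σ ^ 2)⁻¹ := by positivity
  have h1 : Integrable (fun t : ℝ =>
      (Real.sqrt (2 * Real.pi) * σ)⁻¹ * (t * Real.exp (-((2 * σ ^ 2)⁻¹) * t ^ 2))) :=
    (integrable_mul_exp_neg_mul_sq hb).const_mul _
  have h2 := h1.comp_sub_right (g := y)
  apply h2.congr
  filter_upwards with z
  rw [gauss_eq hσ]; ring

lemma integral_gauss_lin (hσ : 0 < σ) (y : ℝ) :
    ∫ z, gauss σ y z * (z - y) = 0 := by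
  have hb : (0:ℝ) < (2 * σ ^ 2)⁻¹ := by positivity
  set c := (Real.sqrt (2 * Real.pi) * σ)⁻¹ with hc
  have h0 : (fun z : ℝ => gauss σ y z * (z - y)) =
      fun z : ℝ => c * ((z - y) * Real.exp (-((2 * σ ^ 2)⁻¹) * (z - y) ^ 2)) := by
    ext z; rw [gauss_eq hσ]; ring
  rw [h0]
  rw [integral_sub_right_eq_self (μ := volume)
    (fun t : ℝ => c * (t * Real.exp (-((2 * σ ^ 2)⁻¹) * t ^ 2))) y]
  rw [integral_const_mul]
  have hodd : ∫ t : ℝ, t * Real.exp (-((2 * σ ^ 2)⁻¹) * t ^ 2) = 0 := by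
    have h := integral_neg_eq_self (fun t : ℝ => t * Real.exp (-((2 * σ ^ 2)⁻¹) * t ^ 2)) volume
    simp only [neg_sq, neg_mul, integral_neg] at h
    simp only [neg_mul]
    linarith
  rw [hodd, mul_zero]

lemma integrable_gauss_sq (hσ : 0 < σ) (y : ℝ) :
    Integrable (fun z => gauss σ y z * (z - y) ^ 2) := by
  have hb : (0:ℝ) < (2 * σ ^ 2)⁻¹ := by positivity
  set b := ((2 * σ ^ 2)⁻¹ : ℝ) with hbdef
  set c := (Real.sqrt (2 * Real.pi) * σ)⁻¹ with hc
  have hcpos : 0 < c := by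
    rw [hc]; have := Real.sqrt_pos.mpr (show (0:ℝ) < 2 * Real.pi by positivity); positivity
  have hint : Integrable (fun z : ℝ => c * b⁻¹ * Real.exp (-(b / 2) * (z - y) ^ 2)) :=
    (((integrable_exp_neg_mul_sq (by positivity : (0:ℝ) < b / 2)).comp_sub_right
      (g := y)).const_mul (c * b⁻¹))
  apply hint.mono'
  · exact ((continuous_gauss σ y).mul (by fun_prop)).aestronglyMeasurable
  · filter_upwards with z
    rw [Real.norm_eq_abs, abs_of_nonneg ?hn]
    · calc gauss σ y z * (z - y) ^ 2 = c * ((z - y) ^ 2 * Real.exp (-b * (z - y) ^ 2)) := by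
            rw [gauss_eq hσ]; ring
        _ ≤ c * (b⁻¹ * Real.exp (-(b / 2) * (z - y) ^ 2)) :=
            mul_le_mul_of_nonneg_left (sq_mul_exp_le hb) hcpos.le
        _ = c * b⁻¹ * Real.exp (-(b / 2) * (z - y) ^ 2) := by ring
    case hn =>
      rw [gauss_eq hσ]; positivity

lemma integral_gauss_sq_le (hσ : 0 < σ) (y : ℝ) :
    ∫ z, gauss σ y z * (z - y) ^ 2 ≤ 3 * σ ^ 2 := by
  have hb : (0:ℝ) < (2 * σ ^ 2)⁻¹ := by positivity
  set b := ((2 * σ ^ 2)⁻¹ : ℝ) with hbdef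
  set c := (Real.sqrt (2 * Real.pi) * σ)⁻¹ with hc
  have hsq2 : 0 < Real.sqrt (2 * Real.pi) := Real.sqrt_pos.mpr (by positivity)
  have hcpos : 0 < c := by rw [hc]; positivity
  have hint : Integrable (fun z : ℝ => c * b⁻¹ * Real.exp (-(b / 2) * (z - y) ^ 2)) :=
    (((integrable_exp_neg_mul_sq (by positivity : (0:ℝ) < b / 2)).comp_sub_right
      (g := y)).const_mul (c * b⁻¹))
  have hmono : ∫ z, gauss σ y z * (z - y) ^ 2 ≤
      ∫ z : ℝ, c * b⁻¹ * Real.exp (-(b / 2) * (z - y) ^ 2) := by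
    apply integral_mono (integrable_gauss_sq hσ y) hint
    intro z
    calc gauss σ y z * (z - y) ^ 2 = c * ((z - y) ^ 2 * Real.exp (-b * (z - y) ^ 2)) := by
          rw [gauss_eq hσ]; ring
      _ ≤ c * (b⁻¹ * Real.exp (-(b / 2) * (z - y) ^ 2)) :=
          mul_le_mul_of_nonneg_left (sq_mul_exp_le hb) hcpos.le
      _ = c * b⁻¹ * Real.exp (-(b / 2) * (z - y) ^ 2) := by ring
  have hval : ∫ z : ℝ, c * b⁻¹ * Real.exp (-(b / 2) * (z - y) ^ 2) =
      c * b⁻¹ * (2 * σ * Real.sqrt Real.pi) := by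
    rw [integral_const_mul, integral_sub_right_eq_self (μ := volume)
      (fun t : ℝ => Real.exp (-(b / 2) * t ^ 2)) y, integral_gaussian]
    congr 1
    rw [show Real.pi / (b / 2) = 4 * Real.pi * σ ^ 2 by rw [hbdef]; field_simp; ring]
    rw [show (4 * Real.pi * σ ^ 2 : ℝ) = (2 * σ * Real.sqrt Real.pi) ^ 2 by
      rw [mul_pow, mul_pow, Real.sq_sqrt Real.pi_pos.le]; ring]
    exact Real.sqrt_sq (by positivity)
  rw [hval] at hmono
  refine hmono.trans ?_
  -- c * b⁻¹ * (2 σ √π) = (√(2π) σ)⁻¹ * 2σ² * 2σ√π = 4 σ² √π / √(2π) = 2√2 σ² ≤ 3σ²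
  rw [hc, hbdef]
  have h2 : Real.sqrt (2 * Real.pi) = Real.sqrt 2 * Real.sqrt Real.pi :=
    Real.sqrt_mul (by norm_num) _
  have hs2 : (0:ℝ) < Real.sqrt 2 := Real.sqrt_pos.mpr (by norm_num)
  have hsp : (0:ℝ) < Real.sqrt Real.pi := Real.sqrt_pos.mpr Real.pi_pos
  have hval2 : (Real.sqrt (2 * Real.pi) * σ)⁻¹ * ((2 * σ ^ 2)⁻¹)⁻¹ * (2 * σ * Real.sqrt Real.pi)
      = 4 * σ ^ 2 / Real.sqrt 2 := by
    rw [h2, inv_inv]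
    field_simp
    ring
  rw [hval2]
  rw [div_le_iff₀ hs2]
  nlinarith [Real.sq_sqrt (show (0:ℝ) ≤ 2 by norm_num), sq_nonneg σ, hs2]



lemma taylor_bound {w w' w'' : ℝ → ℝ} {M : ℝ}
    (hw' : ∀ x, HasDerivAt w (w' x) x)
    (hw'' : ∀ x, HasDerivAt w' (w'' x) x)
    (hM : ∀ x, |w'' x| ≤ M) (y z : ℝ) :
    |w z - w y - w' y * (z - y)| ≤ M * (z - y) ^ 2 := by
  have hM0 : 0 ≤ M := le_trans (abs_nonneg _) (hM 0)
  have hlip : ∀ t : ℝ, |w' t - w' y| ≤ M * |t - y| := by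
    intro t
    have h := (convex_uIcc y t).norm_image_sub_le_of_norm_hasDerivWithin_le
      (f := w') (f' := w'')
      (fun u _ => (hw'' u).hasDerivWithinAt)
      (fun u _ => by simpa using hM u)
      Set.left_mem_uIcc Set.right_mem_uIcc
    simpa [Real.norm_eq_abs] using h
  set g : ℝ → ℝ := fun t => w t - w y - w' y * (t - y) with hg
  have hg' : ∀ t, HasDerivAt g (w' t - w' y) t := by
    intro t
    have h1 : HasDerivAt (fun t : ℝ => w' y * (t - y)) (w' y) t := by
      simpa using (((hasDerivAt_id t).sub_const y).const_mul (w' y))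
    exact ((hw' t).sub_const (w y)).sub h1
  have hbound : ∀ t ∈ Set.uIcc y z, ‖w' t - w' y‖ ≤ M * |z - y| := by
    intro t ht
    rw [Real.norm_eq_abs]
    exact le_trans (hlip t) (mul_le_mul_of_nonneg_left (Set.abs_sub_left_of_mem_uIcc ht) hM0)
  have h := (convex_uIcc y z).norm_image_sub_le_of_norm_hasDerivWithin_le
    (f := g) (f' := fun t => w' t - w' y)
    (fun u _ => (hg' u).hasDerivWithinAt) hbound
    Set.left_mem_uIcc Set.right_mem_uIcc
  have hgy : g y = 0 := by simp [hg]
  rw [hgy, sub_zero, Real.norm_eq_abs, Real.norm_eq_abs] at h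
  calc |g z| ≤ M * |z - y| * |z - y| := h
    _ = M * (z - y) ^ 2 := by rw [mul_assoc, abs_mul_abs_self]; ring


variable {w : ℝ → ℝ} {U σ : ℝ}

lemma gauss_shift (σ m t : ℝ) : gauss σ m (m + t) = gauss σ 0 t := by
  unfold gauss; ring_nf


lemma integrable_gauss_mul (hσ : 0 < σ) (m : ℝ) (hw_cont : Continuous w)
    (h0 : ∀ x, 0 ≤ w x) (hU : ∀ x, w x ≤ U) :
    Integrable (fun z => gauss σ m z * w z) := by
  apply ((integrable_gauss hσ m).const_mul U).mono'
  · exact ((continuous_gauss σ m).mul hw_cont).aestronglyMeasurable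
  · filter_upwards with z
    rw [Real.norm_eq_abs, abs_of_nonneg (mul_nonneg (gauss_nonneg hσ m z) (h0 z))]
    calc gauss σ m z * w z ≤ gauss σ m z * U :=
          mul_le_mul_of_nonneg_left (hU z) (gauss_nonneg hσ m z)
      _ = U * gauss σ m z := by ring

lemma Z_le (hσ : 0 < σ) (m : ℝ) (hw_cont : Continuous w)
    (h0 : ∀ x, 0 ≤ w x) (hU : ∀ x, w x ≤ U) :
    (∫ z, gauss σ m z * w z) ≤ U := by
  have h := integral_mono (integrable_gauss_mul hσ m hw_cont h0 hU)
    ((integrable_gauss hσ m).mul_const U) (fun z =>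
      mul_le_mul_of_nonneg_left (hU z) (gauss_nonneg hσ m z))
  rwa [integral_mul_const, integral_gauss hσ, one_mul] at h

lemma Z_ge {L : ℝ} (hσ : 0 < σ) (m : ℝ) (hw_cont : Continuous w)
    (h0 : ∀ x, 0 ≤ w x) (hU : ∀ x, w x ≤ U) (hLw : ∀ x, L ≤ w x) :
    L ≤ ∫ z, gauss σ m z * w z := by
  have h := integral_mono ((integrable_gauss hσ m).mul_const L)
    (integrable_gauss_mul hσ m hw_cont h0 hU) (fun z =>
      mul_le_mul_of_nonneg_left (hLw z) (gauss_nonneg hσ m z))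
  rwa [integral_mul_const, integral_gauss hσ, one_mul] at h

lemma Z_est {w' w'' : ℝ → ℝ} {M : ℝ} (hσ : 0 < σ) (y : ℝ) (hw_cont : Continuous w)
    (h0 : ∀ x, 0 ≤ w x) (hU : ∀ x, w x ≤ U)
    (hw' : ∀ x, HasDerivAt w (w' x) x) (hw'' : ∀ x, HasDerivAt w' (w'' x) x)
    (hM : ∀ x, |w'' x| ≤ M) :
    |(∫ z, gauss σ y z * w z) - w y| ≤ 3 * M * σ ^ 2 := by
  have hM0 : 0 ≤ M := le_trans (abs_nonneg _) (hM 0)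
  have hi1 : Integrable (fun z => gauss σ y z * w z) :=
    integrable_gauss_mul hσ y hw_cont h0 hU
  have hi2 : Integrable (fun z => gauss σ y z * w y) := (integrable_gauss hσ y).mul_const _
  have hi3 : Integrable (fun z => gauss σ y z * (w' y * (z - y))) := by
    apply ((integrable_gauss_lin hσ y).const_mul (w' y)).congr
    filter_upwards with z; ring
  have key : (∫ z, gauss σ y z * w z) - w y =
      ∫ z, gauss σ y z * (w z - w y - w' y * (z - y)) := by
    have heq : (fun z => gauss σ y z * (w z - w y - w' y * (z - y))) =
        fun z => (gauss σ y z * w z - gauss σ y z * w y) - gauss σ y z * (w' y * (z - y)) := by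
      ext z; ring
    have hi12 : Integrable (fun z => gauss σ y z * w z - gauss σ y z * w y) := hi1.sub hi2
    rw [heq, integral_sub hi12 hi3, integral_sub hi1 hi2]
    have e1 : ∫ z, gauss σ y z * w y = w y := by
      rw [integral_mul_const, integral_gauss hσ, one_mul]
    have e2 : ∫ z, gauss σ y z * (w' y * (z - y)) = 0 := by
      have heq2 : (fun z => gauss σ y z * (w' y * (z - y))) =
          fun z => w' y * (gauss σ y z * (z - y)) := by ext z; ring
      rw [heq2, integral_const_mul, integral_gauss_lin hσ, mul_zero]
    rw [e1, e2]; ring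
  rw [key]
  have hir : Integrable (fun z => gauss σ y z * (w z - w y - w' y * (z - y))) := by
    have hi12 : Integrable (fun z => gauss σ y z * w z - gauss σ y z * w y) := hi1.sub hi2
    have hi123 : Integrable (fun z =>
        (gauss σ y z * w z - gauss σ y z * w y) - gauss σ y z * (w' y * (z - y))) :=
      hi12.sub hi3
    apply hi123.congr
    filter_upwards with z; ring
  calc |∫ z, gauss σ y z * (w z - w y - w' y * (z - y))|
      ≤ ∫ z, |gauss σ y z * (w z - w y - w' y * (z - y))| := by
        simpa only [Real.norm_eq_abs] using
          norm_integral_le_integral_norm (fun z => gauss σ y z * (w z - w y - w' y * (z - y)))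
    _ ≤ ∫ z, M * (gauss σ y z * (z - y) ^ 2) := by
        apply integral_mono hir.abs ((integrable_gauss_sq hσ y).const_mul M)
        intro z
        dsimp only
        rw [abs_mul, abs_of_nonneg (gauss_nonneg hσ y z)]
        calc gauss σ y z * |w z - w y - w' y * (z - y)|
            ≤ gauss σ y z * (M * (z - y) ^ 2) :=
              mul_le_mul_of_nonneg_left (taylor_bound hw' hw'' hM y z) (gauss_nonneg hσ y z)
          _ = M * (gauss σ y z * (z - y) ^ 2) := by ring
    _ = M * ∫ z, gauss σ y z * (z - y) ^ 2 := integral_const_mul _ _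
    _ ≤ M * (3 * σ ^ 2) := mul_le_mul_of_nonneg_left (integral_gauss_sq_le hσ y) hM0
    _ = 3 * M * σ ^ 2 := by ring

lemma continuous_Z (hσ : 0 < σ) (hw_cont : Continuous w)
    (h0 : ∀ x, 0 ≤ w x) (hU : ∀ x, w x ≤ U) :
    Continuous (fun m => ∫ z, gauss σ m z * w z) := by
  have heq : ∀ m, ∫ z, gauss σ m z * w z = ∫ t, gauss σ 0 t * w (m + t) := by
    intro m
    rw [← integral_add_left_eq_self (μ := volume) (fun z => gauss σ m z * w z) m]
    congr 1; ext t; rw [gauss_shift]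
  rw [funext heq]
  apply continuous_of_dominated (bound := fun t => gauss σ 0 t * U)
  · intro m
    exact ((continuous_gauss σ 0).mul (hw_cont.comp (by fun_prop))).aestronglyMeasurable
  · intro m
    filter_upwards with t
    rw [Real.norm_eq_abs, abs_of_nonneg (mul_nonneg (gauss_nonneg hσ 0 t) (h0 _))]
    exact mul_le_mul_of_nonneg_left (hU _) (gauss_nonneg hσ 0 t)
  · exact (integrable_gauss hσ 0).mul_const U
  · filter_upwards with t
    exact continuous_const.mul (hw_cont.comp (by fun_prop))



lemma gauss_conv {σ : ℝ} (hσ : 0 < σ) (x y : ℝ) :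
    ∫ z, gauss σ x z * gauss σ y z = gauss (Real.sqrt 2 * σ) x y := by
  have hs2 : (0:ℝ) < Real.sqrt 2 := Real.sqrt_pos.mpr (by norm_num)
  have e2 : (Real.sqrt 2) ^ 2 = 2 := Real.sq_sqrt (by norm_num)
  have hσ2 : 0 < σ / Real.sqrt 2 := by positivity
  have hpt : ∀ z, gauss σ x z * gauss σ y z =
      gauss (Real.sqrt 2 * σ) x y * gauss (σ / Real.sqrt 2) ((x + y) / 2) z := by
    intro z
    unfold gauss
    rw [mul_mul_mul_comm, ← Real.exp_add, mul_mul_mul_comm, ← Real.exp_add]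
    congr 1
    · rw [← mul_inv, ← mul_inv]
      congr 1
      field_simp
    · apply congrArg Real.exp
      rw [mul_pow, div_pow, e2]
      have hσ0 : (σ:ℝ) ^ 2 ≠ 0 := by positivity
      field_simp
      ring
  calc ∫ z, gauss σ x z * gauss σ y z
      = ∫ z, gauss (Real.sqrt 2 * σ) x y * gauss (σ / Real.sqrt 2) ((x + y) / 2) z := by
        congr 1; ext z; exact hpt z
    _ = gauss (Real.sqrt 2 * σ) x y * ∫ z, gauss (σ / Real.sqrt 2) ((x + y) / 2) z :=
        integral_const_mul _ _
    _ = gauss (Real.sqrt 2 * σ) x y := by rw [integral_gauss hσ2, mul_one]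



set_option maxHeartbeats 1000000 in
lemma scalar_key {L U W A B s : ℝ} (hL : 0 < L) (hLU : L ≤ U)
    (hW1 : L ≤ W) (hW2 : W ≤ U) (hA1 : L ≤ A) (hA2 : A ≤ U) (hB1 : L ≤ B) (hB2 : B ≤ U)
    (hAW : |A - W| ≤ s) (hBW : |B - W| ≤ 2 * s) (hs : 0 < s) :
    (1 + s / L) * B ≤ (1 + 10 * (L ^ 2 + U ^ 2) / L ^ 3 * s) * A ∧
      (1 - 10 * (L ^ 2 + U ^ 2) / L ^ 3 * s) * A ≤ (1 - s / L) * B := by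
  rw [abs_le] at hAW hBW
  have hU : 0 < U := hL.trans_le hLU
  have hL3 : (0:ℝ) < L ^ 3 := by positivity
  have hBA : B ≤ A + 3 * s := by linarith [hAW.1, hBW.2]
  have hAB : A ≤ B + 3 * s := by linarith [hAW.2, hBW.1]
  have A4 : 0 ≤ s * L * U * (U - L) := by nlinarith [mul_pos hs hL, mul_pos (mul_pos hs hL) hU, hLU]
  have A5 : 0 < s * L ^ 3 := by positivity
  have A6 : 0 ≤ s * L * U ^ 2 := by positivity
  have key1 : (L ^ 3 + s * L ^ 2) * B ≤ (L ^ 3 + 10 * (L ^ 2 + U ^ 2) * s) * A := by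
    have C2 : (L ^ 3 + 10 * (L ^ 2 + U ^ 2) * s) * L ≤ (L ^ 3 + 10 * (L ^ 2 + U ^ 2) * s) * A :=
      mul_le_mul_of_nonneg_left hA1 (by positivity)
    rcases le_or_gt (4 * s) L with h4 | h4
    · have A1 : L ^ 3 * B ≤ L ^ 3 * (A + 3 * s) := mul_le_mul_of_nonneg_left hBA hL3.le
      have A2 : (s * L ^ 2) * B ≤ (s * L ^ 2) * U := mul_le_mul_of_nonneg_left hB2 (by positivity)
      nlinarith [A1, A2, C2, A4, A5, A6]
    · have C1 : (L ^ 3 + s * L ^ 2) * B ≤ (L ^ 3 + s * L ^ 2) * U :=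
        mul_le_mul_of_nonneg_left hB2 (by positivity)
      have C3 : L * (L ^ 2 * (U - L)) ≤ (4 * s) * (L ^ 2 * (U - L)) :=
        mul_le_mul_of_nonneg_right h4.le (by nlinarith [mul_pos hs hL, mul_pos (mul_pos hs hL) hU, hLU])
      nlinarith [C1, C2, C3, A4, A5, A6]
  have key2 : (L ^ 3 - 10 * (L ^ 2 + U ^ 2) * s) * A ≤ (L ^ 3 - s * L ^ 2) * B := by
    rcases le_or_gt (4 * s) L with h4 | h4
    · have B1 : L ^ 3 * A ≤ L ^ 3 * (B + 3 * s) := mul_le_mul_of_nonneg_left hAB hL3.le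
      have A2 : (s * L ^ 2) * B ≤ (s * L ^ 2) * U := mul_le_mul_of_nonneg_left hB2 (by positivity)
      have C2 : (10 * (L ^ 2 + U ^ 2) * s) * L ≤ (10 * (L ^ 2 + U ^ 2) * s) * A :=
        mul_le_mul_of_nonneg_left hA1 (by positivity)
      nlinarith [B1, A2, C2, A4, A5, A6]
    · have h6 : L * L ^ 2 < (4 * s) * L ^ 2 := by
        apply mul_lt_mul_of_pos_right h4; positivity
      have hc2 : L ^ 3 ≤ 10 * (L ^ 2 + U ^ 2) * s := by
        nlinarith [h6, mul_nonneg hs.le (sq_nonneg U), mul_nonneg hs.le (sq_nonneg L)]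
      have E1 : 0 ≤ (10 * (L ^ 2 + U ^ 2) * s - L ^ 3) * (A - L) :=
        mul_nonneg (by linarith) (by linarith)
      rcases le_or_gt s L with h5 | h5
      · have E2 : 0 ≤ (L ^ 3 - s * L ^ 2) * B := mul_nonneg
          (by nlinarith [mul_nonneg (sq_nonneg L) (sub_nonneg.mpr h5)]) (by linarith)
        have E3 : 0 ≤ (10 * (L ^ 2 + U ^ 2) * s - L ^ 3) * A := mul_nonneg (by linarith) (by linarith)
        linarith
      · have E4 : 0 ≤ (L ^ 3 - s * L ^ 2) * (B - U) := by
          nlinarith [mul_nonneg (mul_nonneg (sq_nonneg L) (sub_nonneg.mpr h5.le))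
            (sub_nonneg.mpr hB2)]
        have A7 : 0 ≤ L ^ 3 * (U - L) := mul_nonneg (by positivity) (by linarith)
        nlinarith [E1, E4, A4, A5, A6, A7]
  constructor
  · calc (1 + s / L) * B = (L ^ 3 + s * L ^ 2) * B / L ^ 3 := by field_simp; try ring
      _ ≤ (L ^ 3 + 10 * (L ^ 2 + U ^ 2) * s) * A / L ^ 3 := by gcongr
      _ = (1 + 10 * (L ^ 2 + U ^ 2) / L ^ 3 * s) * A := by field_simp; try ring
  · calc (1 - 10 * (L ^ 2 + U ^ 2) / L ^ 3 * s) * A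
        = (L ^ 3 - 10 * (L ^ 2 + U ^ 2) * s) * A / L ^ 3 := by field_simp; try ring
      _ ≤ (L ^ 3 - s * L ^ 2) * B / L ^ 3 := by gcongr
      _ = (1 - s / L) * B := by field_simp; try ring

lemma integrable_gauss_prod {σ : ℝ} (hσ : 0 < σ) (x y : ℝ) :
    Integrable (fun z => gauss σ x z * gauss σ y z) := by
  apply ((integrable_gauss hσ y).const_mul ((Real.sqrt (2 * Real.pi) * σ)⁻¹)).mono'
  · exact ((continuous_gauss σ x).mul (continuous_gauss σ y)).aestronglyMeasurable
  · filter_upwards with z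
    rw [Real.norm_eq_abs,
      abs_of_nonneg (mul_nonneg (gauss_nonneg hσ x z) (gauss_nonneg hσ y z))]
    exact mul_le_mul_of_nonneg_right (gauss_le hσ x z) (gauss_nonneg hσ y z)

set_option maxHeartbeats 1000000 in
theorem asymptotic_robustness_degree_two (w w' w'' : ℝ → ℝ) (L U M ω : ℝ)
    (hw_cont : Continuous w)
    (hw' : ∀ x, HasDerivAt w (w' x) x)
    (hw'' : ∀ x, HasDerivAt w' (w'' x) x)
    (hM : ∀ x, |w'' x| ≤ M)
    (hL : 0 < L) (hLU : ∀ x, L ≤ w x ∧ w x ≤ U)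
    (hω : 0 < ω) :
    ∃ C > 0, ∀ x y τ : ℝ, 0 < τ →
      (1 - C * τ) * p1 w ω (2 * τ) y x ≤ p2 w ω τ y x ∧
        p2 w ω τ y x ≤ (1 + C * τ) * p1 w ω (2 * τ) y x := by
  have hLU' : L ≤ U := (hLU 0).1.trans (hLU 0).2
  have hM0 : 0 ≤ M := le_trans (abs_nonneg _) (hM 0)
  have h0w : ∀ x, 0 ≤ w x := fun x => hL.le.trans (hLU x).1
  have hUw : ∀ x, w x ≤ U := fun x => (hLU x).2
  have hLw : ∀ x, L ≤ w x := fun x => (hLU x).1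
  set a : ℝ := 3 * (M + 1) * ω ^ 2 with ha_def
  have ha : 0 < a := by
    have h1 : (0:ℝ) < 3 * (M + 1) := by linarith
    exact mul_pos h1 (pow_pos hω 2)
  refine ⟨10 * (L ^ 2 + U ^ 2) / L ^ 3 * a, mul_pos (by positivity) ha, ?_⟩
  intro x y τ hτ
  set σ := ω * Real.sqrt τ with hσdef
  have hσ : 0 < σ := mul_pos hω (Real.sqrt_pos.mpr hτ)
  set σ₂ := ω * Real.sqrt (2 * τ) with hσ₂def
  have hσ₂ : 0 < σ₂ := mul_pos hω (Real.sqrt_pos.mpr (by linarith))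
  have hσ₂eq : σ₂ = Real.sqrt 2 * σ := by
    rw [hσ₂def, hσdef, Real.sqrt_mul (by norm_num : (0:ℝ) ≤ 2)]; ring
  have hσsq : σ ^ 2 = ω ^ 2 * τ := by rw [hσdef, mul_pow, Real.sq_sqrt hτ.le]
  have hσ₂sq : σ₂ ^ 2 = ω ^ 2 * (2 * τ) := by
    rw [hσ₂def, mul_pow, Real.sq_sqrt (by linarith)]
  set Z : ℝ → ℝ := fun m => ∫ z, gauss σ m z * w z with hZdef
  set B : ℝ := ∫ z, gauss σ₂ y z * w z with hBdef
  have hZL : ∀ m, L ≤ Z m := fun m => Z_ge hσ m hw_cont h0w hUw hLw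
  have hZU : ∀ m, Z m ≤ U := fun m => Z_le hσ m hw_cont h0w hUw
  have hBL : L ≤ B := Z_ge hσ₂ y hw_cont h0w hUw hLw
  have hBU : B ≤ U := Z_le hσ₂ y hw_cont h0w hUw
  have hZpos : ∀ m, 0 < Z m := fun m => lt_of_lt_of_le hL (hZL m)
  have hBpos : 0 < B := lt_of_lt_of_le hL hBL
  have haτ : 0 < a * τ := mul_pos ha hτ
  have hZw : ∀ m, |Z m - w m| ≤ a * τ := by
    intro m
    refine le_trans (Z_est hσ m hw_cont h0w hUw hw' hw'' hM) ?_
    rw [hσsq, ha_def]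
    nlinarith [mul_pos (pow_pos hω 2) hτ]
  have hBw : |B - w y| ≤ 2 * (a * τ) := by
    refine le_trans (Z_est hσ₂ y hw_cont h0w hUw hw' hw'' hM) ?_
    rw [hσ₂sq, ha_def]
    nlinarith [mul_pos (pow_pos hω 2) hτ]
  have hp1 : p1 w ω (2 * τ) y x = gauss σ₂ y x * w x / B := rfl
  -- pointwise ratio bounds
  have hZmul : ∀ z, a * τ ≤ a * τ / L * Z z := by
    intro z
    have h3 : a * τ / L * L ≤ a * τ / L * Z z :=
      mul_le_mul_of_nonneg_left (hZL z) (by positivity)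
    have h4 : a * τ / L * L = a * τ := by field_simp
    linarith
  have hwr_up : ∀ z, w z / Z z ≤ 1 + a * τ / L := by
    intro z
    rw [div_le_iff₀ (hZpos z)]
    have h1 := (abs_le.mp (hZw z)).1
    have h2 := hZmul z
    nlinarith
  have hwr_lo : ∀ z, 1 - a * τ / L ≤ w z / Z z := by
    intro z
    rw [le_div_iff₀ (hZpos z)]
    have h1 := (abs_le.mp (hZw z)).2
    have h2 := hZmul z
    nlinarith
  -- integrand rewriting
  have hfeq : ∀ z, p1 w ω τ z x * p1 w ω τ y z =
      (w z / Z z) * ((w x / Z y) * (gauss σ x z * gauss σ y z)) := by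
    intro z
    show gauss σ z x * w x / Z z * (gauss σ y z * w z / Z y) = _
    rw [gauss_symm σ z x]; ring
  have hp2eq : p2 w ω τ y x =
      ∫ z, (w z / Z z) * ((w x / Z y) * (gauss σ x z * gauss σ y z)) := by
    show (∫ z, p1 w ω τ z x * p1 w ω τ y z) = _
    congr 1; funext z; exact hfeq z
  -- integrability
  have hZc : Continuous Z := continuous_Z hσ hw_cont h0w hUw
  have hg_cont : Continuous fun z =>
      (w z / Z z) * ((w x / Z y) * (gauss σ x z * gauss σ y z)) := by
    apply Continuous.mul
    · exact hw_cont.div hZc (fun z => (hZpos z).ne')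
    · exact continuous_const.mul ((continuous_gauss σ x).mul (continuous_gauss σ y))
  have hh_int : Integrable (fun z => gauss σ x z * gauss σ y z) := integrable_gauss_prod hσ x y
  have hh_nonneg : ∀ z, 0 ≤ (w x / Z y) * (gauss σ x z * gauss σ y z) := fun z =>
    mul_nonneg (div_nonneg (h0w x) (hZpos y).le)
      (mul_nonneg (gauss_nonneg hσ x z) (gauss_nonneg hσ y z))
  have hH_int : Integrable (fun z =>
      (1 + a * τ / L) * ((w x / Z y) * (gauss σ x z * gauss σ y z))) :=
    (hh_int.const_mul _).const_mul _
  have hH'_int : Integrable (fun z =>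
      (1 - a * τ / L) * ((w x / Z y) * (gauss σ x z * gauss σ y z))) :=
    (hh_int.const_mul _).const_mul _
  have hg_up : ∀ z, (w z / Z z) * ((w x / Z y) * (gauss σ x z * gauss σ y z)) ≤
      (1 + a * τ / L) * ((w x / Z y) * (gauss σ x z * gauss σ y z)) := fun z =>
    mul_le_mul_of_nonneg_right (hwr_up z) (hh_nonneg z)
  have hg_lo : ∀ z, (1 - a * τ / L) * ((w x / Z y) * (gauss σ x z * gauss σ y z)) ≤
      (w z / Z z) * ((w x / Z y) * (gauss σ x z * gauss σ y z)) := fun z =>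
    mul_le_mul_of_nonneg_right (hwr_lo z) (hh_nonneg z)
  have hg_int : Integrable (fun z =>
      (w z / Z z) * ((w x / Z y) * (gauss σ x z * gauss σ y z))) := by
    apply hH_int.mono' hg_cont.aestronglyMeasurable
    filter_upwards with z
    rw [Real.norm_eq_abs, abs_of_nonneg (mul_nonneg (div_nonneg (h0w z) (hZpos z).le)
      (hh_nonneg z))]
    exact hg_up z
  have hk2 : ∫ z, gauss σ x z * gauss σ y z = gauss σ₂ x y := by
    rw [gauss_conv hσ x y, ← hσ₂eq]
  -- integral bounds
  have hup : p2 w ω τ y x ≤ (1 + a * τ / L) * ((w x / Z y) * gauss σ₂ x y) := by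
    rw [hp2eq]
    calc (∫ z, (w z / Z z) * ((w x / Z y) * (gauss σ x z * gauss σ y z)))
        ≤ ∫ z, (1 + a * τ / L) * ((w x / Z y) * (gauss σ x z * gauss σ y z)) :=
          integral_mono hg_int hH_int hg_up
      _ = (1 + a * τ / L) * ((w x / Z y) * ∫ z, gauss σ x z * gauss σ y z) := by
          rw [integral_const_mul, integral_const_mul]
      _ = (1 + a * τ / L) * ((w x / Z y) * gauss σ₂ x y) := by rw [hk2]
  have hlo : (1 - a * τ / L) * ((w x / Z y) * gauss σ₂ x y) ≤ p2 w ω τ y x := by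
    rw [hp2eq]
    calc (1 - a * τ / L) * ((w x / Z y) * gauss σ₂ x y)
        = ∫ z, (1 - a * τ / L) * ((w x / Z y) * (gauss σ x z * gauss σ y z)) := by
          rw [integral_const_mul, integral_const_mul, hk2]
      _ ≤ ∫ z, (w z / Z z) * ((w x / Z y) * (gauss σ x z * gauss σ y z)) :=
          integral_mono hH'_int hg_int hg_lo
  -- scalar comparison
  obtain ⟨S1, S2⟩ := scalar_key hL hLU' (hLw y) (hUw y) (hZL y) (hZU y) hBL hBU
    (hZw y) hBw haτ
  have hCτ : 10 * (L ^ 2 + U ^ 2) / L ^ 3 * a * τ =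
      10 * (L ^ 2 + U ^ 2) / L ^ 3 * (a * τ) := by ring
  have hkw : 0 ≤ gauss σ₂ x y * w x := mul_nonneg (gauss_nonneg hσ₂ x y) (h0w x)
  constructor
  · calc (1 - 10 * (L ^ 2 + U ^ 2) / L ^ 3 * a * τ) * p1 w ω (2 * τ) y x
        = ((1 - 10 * (L ^ 2 + U ^ 2) / L ^ 3 * a * τ) / B) * (gauss σ₂ x y * w x) := by
          rw [hp1, gauss_symm σ₂ y x]; ring
      _ ≤ ((1 - a * τ / L) / Z y) * (gauss σ₂ x y * w x) := by
          apply mul_le_mul_of_nonneg_right _ hkw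
          rw [div_le_div_iff₀ hBpos (hZpos y), hCτ]
          exact S2
      _ = (1 - a * τ / L) * ((w x / Z y) * gauss σ₂ x y) := by ring
      _ ≤ p2 w ω τ y x := hlo
  · calc p2 w ω τ y x ≤ (1 + a * τ / L) * ((w x / Z y) * gauss σ₂ x y) := hup
      _ = ((1 + a * τ / L) / Z y) * (gauss σ₂ x y * w x) := by ring
      _ ≤ ((1 + 10 * (L ^ 2 + U ^ 2) / L ^ 3 * a * τ) / B) * (gauss σ₂ x y * w x) := by
          apply mul_le_mul_of_nonneg_right _ hkw
          rw [div_le_div_iff₀ (hZpos y) hBpos, hCτ]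
          exact S1
      _ = (1 + 10 * (L ^ 2 + U ^ 2) / L ^ 3 * a * τ) * p1 w ω (2 * τ) y x := by
          rw [hp1, gauss_symm σ₂ y x]; ring
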